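/- arXiv:1807.03462 — 5 statements merged into one kernel-verified Lean document; each statement's English description precedes it below -/
import Mathlib

section
/- For ε > 0, the function q ↦ E_n L_{α,ε}(x,q) = ((1-α)/n) Σ_{i: x_i ≤ q} (q - x_i)^{1+ε} + (α/n) Σ_{i: x_i > q} (x_i - q)^{1+ε} is strictly convex on ℝ, and hence has at most one minimizer. -/
open Finset Real Filter Topology

noncomputable def L (α ε x q : ℝ) : ℝ :=
  if x ≤ q then (1 - α) * (q - x) ^ (1 + ε) else α * (x - q) ^ (1 + ε)

noncomputable def EnL (n : ℕ) (α ε : ℝ) (x : Fin n → ℝ) (q : ℝ) : ℝ :=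
  (1 / (n : ℝ)) * ∑ i, L α ε (x i) q

/-- Unified formula for the derivative of `L α ε x`. -/
noncomputable def DL (α ε x q : ℝ) : ℝ :=
  (1 + ε) * ((1 - α) * (max (q - x) 0) ^ ε - α * (max (x - q) 0) ^ ε)

lemma hasDerivAt_L (α ε x : ℝ) (hε : 0 < ε) (hα : α ∈ Set.Ioo (0 : ℝ) 1) (q : ℝ) :
    HasDerivAt (L α ε x) (DL α ε x q) q := by
  rcases lt_trichotomy q x with hq | rfl | hq
  · -- q < x : L agrees with α * (x - ·)^(1+ε) near q
    have h1 : HasDerivAt (fun y => x - y) (-1) q := by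
      simpa using (hasDerivAt_id q).const_sub x
    have h2 : HasDerivAt (fun y => α * (x - y) ^ (1 + ε))
        (α * (-1 * (1 + ε) * (x - q) ^ (1 + ε - 1))) q :=
      (h1.rpow_const (Or.inl (ne_of_gt (sub_pos.mpr hq)))).const_mul α
    have heq : L α ε x =ᶠ[𝓝 q] fun y => α * (x - y) ^ (1 + ε) := by
      filter_upwards [Iio_mem_nhds hq] with y hy
      simp [L, not_le.mpr (Set.mem_Iio.mp hy)]
    have := h2.congr_of_eventuallyEq heq
    refine this.congr_deriv ?_
    have hmax1 : max (q - x) 0 = 0 := max_eq_right (by linarith)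
    have hmax2 : max (x - q) 0 = x - q := max_eq_left (by linarith)
    rw [DL, hmax1, hmax2, Real.zero_rpow hε.ne']
    ring_nf
  · -- q = x : derivative is 0, via slope squeeze
    have hD : DL α ε q q = 0 := by
      simp [DL, Real.zero_rpow hε.ne']
    rw [hasDerivAt_iff_tendsto_slope, hD]
    have hLx : L α ε q q = 0 := by
      simp [L, Real.zero_rpow (by positivity : (1:ℝ) + ε ≠ 0)]
    apply squeeze_zero_norm (a := fun y => |y - q| ^ ε)
    · intro y
      rcases eq_or_ne y q with rfl | hy
      · simp [slope, Real.rpow_nonneg]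
      · have hyx : (0:ℝ) < |y - q| := by
          rw [abs_pos]; exact sub_ne_zero.mpr hy
        have hL : |L α ε q y| ≤ |y - q| ^ (1 + ε) := by
          rcases le_or_gt q y with h | h
          · rw [L, if_pos h, abs_of_nonneg (mul_nonneg (by linarith [hα.2]) (Real.rpow_nonneg (by linarith) _))]
            have : |y - q| = y - q := abs_of_nonneg (by linarith)
            rw [this]
            nlinarith [Real.rpow_nonneg (show (0:ℝ) ≤ y - q by linarith) (1 + ε), hα.1, hα.2]
          · rw [L, if_neg (not_le.mpr h), abs_of_nonneg (mul_nonneg hα.1.le (Real.rpow_nonneg (by linarith) _))]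
            have : |y - q| = q - y := by rw [abs_sub_comm]; exact abs_of_nonneg (by linarith)
            rw [this]
            nlinarith [Real.rpow_nonneg (show (0:ℝ) ≤ q - y by linarith) (1 + ε), hα.1, hα.2]
        have hslope : ‖slope (L α ε q) q y‖ = |L α ε q y| / |y - q| := by
          rw [slope_def_field, hLx]
          simp [abs_div]
        rw [hslope, div_le_iff₀ hyx]
        calc |L α ε q y| ≤ |y - q| ^ (1 + ε) := hL
          _ = |y - q| ^ ε * |y - q| := by
              rw [add_comm, Real.rpow_add hyx, Real.rpow_one]
    · have hc : ContinuousAt (fun z : ℝ => z ^ ε) 0 :=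
        Real.continuousAt_rpow_const 0 ε (Or.inr hε.le)
      have h1 : Tendsto (fun y : ℝ => |y - q|) (𝓝[≠] q) (𝓝 0) := by
        have : Tendsto (fun y : ℝ => |y - q|) (𝓝 q) (𝓝 |q - q|) := by
          exact ((continuous_id.sub continuous_const).abs).continuousAt
        simpa using this.mono_left nhdsWithin_le_nhds
      have := hc.tendsto.comp h1
      simpa [Function.comp_def, Real.zero_rpow hε.ne'] using this
  · -- x < q
    have h1 : HasDerivAt (fun y => y - x) 1 q := (hasDerivAt_id q).sub_const x
    have h2 : HasDerivAt (fun y => (1 - α) * (y - x) ^ (1 + ε))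
        ((1 - α) * (1 * (1 + ε) * (q - x) ^ (1 + ε - 1))) q :=
      (h1.rpow_const (Or.inl (ne_of_gt (sub_pos.mpr hq)))).const_mul (1 - α)
    have heq : L α ε x =ᶠ[𝓝 q] fun y => (1 - α) * (y - x) ^ (1 + ε) := by
      filter_upwards [Ioi_mem_nhds hq] with y hy
      simp [L, le_of_lt (Set.mem_Ioi.mp hy)]
    have := h2.congr_of_eventuallyEq heq
    refine this.congr_deriv ?_
    have hmax1 : max (q - x) 0 = q - x := max_eq_left (by linarith)
    have hmax2 : max (x - q) 0 = 0 := max_eq_right (by linarith)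
    rw [DL, hmax1, hmax2, Real.zero_rpow hε.ne']
    ring_nf

lemma strictMono_DL (α ε x : ℝ) (hε : 0 < ε) (hα : α ∈ Set.Ioo (0 : ℝ) 1) :
    StrictMono (DL α ε x) := by
  intro p r hpr
  have h1ε : (0:ℝ) < 1 + ε := by linarith
  rw [DL, DL]
  apply mul_lt_mul_of_pos_left _ h1ε
  rcases le_or_gt r x with hr | hr
  · -- p < r ≤ x : second terms strict, first terms both 0
    have hp : p < x := lt_of_lt_of_le hpr hr
    have e1 : max (p - x) 0 = 0 := max_eq_right (by linarith)
    have e2 : max (r - x) 0 = 0 := max_eq_right (by linarith)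
    have e3 : max (x - p) 0 = x - p := max_eq_left (by linarith)
    have e4 : max (x - r) 0 = x - r := max_eq_left (by linarith)
    rw [e1, e2, e3, e4]
    have : (x - r) ^ ε < (x - p) ^ ε :=
      Real.rpow_lt_rpow (by linarith) (by linarith) hε
    nlinarith [hα.1]
  · rcases le_or_gt x p with hp | hp
    · -- x ≤ p < r : first terms strict
      have e1 : max (p - x) 0 = p - x := max_eq_left (by linarith)
      have e2 : max (r - x) 0 = r - x := max_eq_left (by linarith)
      have e3 : max (x - p) 0 = 0 := max_eq_right (by linarith)
      have e4 : max (x - r) 0 = 0 := max_eq_right (by linarith)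
      rw [e1, e2, e3, e4]
      have : (p - x) ^ ε < (r - x) ^ ε :=
        Real.rpow_lt_rpow (by linarith) (by linarith) hε
      nlinarith [hα.2]
    · -- p < x < r : D p < 0 < D r
      have e1 : max (p - x) 0 = 0 := max_eq_right (by linarith)
      have e3 : max (x - p) 0 = x - p := max_eq_left (by linarith)
      have e2 : max (r - x) 0 = r - x := max_eq_left (by linarith)
      have e4 : max (x - r) 0 = 0 := max_eq_right (by linarith)
      rw [e1, e2, e3, e4, Real.zero_rpow hε.ne']
      have h5 : (0:ℝ) < (x - p) ^ ε := Real.rpow_pos_of_pos (by linarith) ε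
      have h6 : (0:ℝ) < (r - x) ^ ε := Real.rpow_pos_of_pos (by linarith) ε
      nlinarith [hα.1, hα.2]

lemma strictConvexOn_L (α ε x : ℝ) (hε : 0 < ε) (hα : α ∈ Set.Ioo (0 : ℝ) 1) :
    StrictConvexOn ℝ Set.univ (L α ε x) := by
  have hD : ∀ q, HasDerivAt (L α ε x) (DL α ε x q) q := hasDerivAt_L α ε x hε hα
  have hderiv : deriv (L α ε x) = DL α ε x := funext fun q => (hD q).deriv
  have hcont : Continuous (L α ε x) := by
    apply continuous_iff_continuousAt.mpr
    exact fun q => (hD q).continuousAt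
  exact StrictMono.strictConvexOn_univ_of_deriv hcont
    (hderiv ▸ strictMono_DL α ε x hε hα)

lemma strictConvexOn_sum {ι : Type*} (t : Finset ι) (ht : t.Nonempty) (f : ι → ℝ → ℝ)
    (h : ∀ i ∈ t, StrictConvexOn ℝ Set.univ (f i)) :
    StrictConvexOn ℝ Set.univ (fun q => ∑ i ∈ t, f i q) := by
  induction ht using Finset.Nonempty.cons_induction with
  | singleton a => simpa using h a (by simp)
  | cons a s ha hs ih =>
    simp only [Finset.sum_cons]
    exact (h a (by simp)).add_convexOn
      (ih (fun i hi => h i (Finset.mem_cons_of_mem hi))).convexOn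

lemma strictConvexOn_const_mul (c : ℝ) (hc : 0 < c) (f : ℝ → ℝ)
    (hf : StrictConvexOn ℝ Set.univ f) :
    StrictConvexOn ℝ Set.univ (fun q => c * f q) := by
  refine ⟨convex_univ, fun p _ r _ hpr a b ha hb hab => ?_⟩
  have := hf.2 (Set.mem_univ p) (Set.mem_univ r) hpr ha hb hab
  simp only [smul_eq_mul] at *
  nlinarith

theorem stmt_0 (n : ℕ) (hn : 1 ≤ n) (x : Fin n → ℝ) (α ε : ℝ)
    (hα : α ∈ Set.Ioo (0 : ℝ) 1) (hε : 0 < ε) :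
    StrictConvexOn ℝ Set.univ (EnL n α ε x) ∧
    ∀ q₁ q₂ : ℝ, IsMinOn (EnL n α ε x) Set.univ q₁ →
      IsMinOn (EnL n α ε x) Set.univ q₂ → q₁ = q₂ := by
  have hn0 : (0:ℝ) < 1 / (n : ℝ) := by positivity
  have hne : (Finset.univ : Finset (Fin n)).Nonempty := by
    rw [Finset.univ_nonempty_iff]
    exact Fin.pos_iff_nonempty.mp hn
  have hsum : StrictConvexOn ℝ Set.univ (fun q => ∑ i, L α ε (x i) q) :=
    strictConvexOn_sum _ hne _ (fun i _ => strictConvexOn_L α ε (x i) hε hα)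
  have hmain : StrictConvexOn ℝ Set.univ (EnL n α ε x) :=
    strictConvexOn_const_mul _ hn0 _ hsum
  exact ⟨hmain, fun q₁ q₂ h1 h2 =>
    hmain.eq_of_isMinOn h1 h2 (Set.mem_univ _) (Set.mem_univ _)⟩
end

section
/- Suppose F_n(q) = α for all q in an open interval (q_L, q_H) containing no sample points, where the atoms q_L and q_H are themselves sample points. Then the function G(q) = (1-α) Σ_{i: x_i < q} log(q - x_i) − α Σ_{i: x_i > q} log(x_i - q) is strictly increasing and continuous on (q_L, q_H), tends to −∞ as q ↓ q_L, tends to +∞ as q ↑ q_H, and hence has a unique zero q_α^log in (q_L, q_H). -/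
open Finset Real Filter Topology

noncomputable def Fn (n : ℕ) (x : Fin n → ℝ) (t : ℝ) : ℝ :=
  ((Finset.univ.filter (fun i => x i ≤ t)).card : ℝ) / n

noncomputable def G (n : ℕ) (x : Fin n → ℝ) (α q : ℝ) : ℝ :=
  (1 - α) * ∑ i ∈ Finset.univ.filter (fun i => x i < q), Real.log (q - x i)
    - α * ∑ i ∈ Finset.univ.filter (fun i => q < x i), Real.log (x i - q)

theorem stmt_3 (n : ℕ) (hn : 1 ≤ n) (x : Fin n → ℝ) (α : ℝ)
    (hα : α ∈ Set.Ioo (0 : ℝ) 1) (qL qH : ℝ) (hLH : qL < qH)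
    (hqL : ∃ i, x i = qL) (hqH : ∃ i, x i = qH)
    (hgap : ∀ i, x i ∉ Set.Ioo qL qH)
    (hF : ∀ q ∈ Set.Ico qL qH, Fn n x q = α) :
    StrictMonoOn (G n x α) (Set.Ioo qL qH) ∧
    ContinuousOn (G n x α) (Set.Ioo qL qH) ∧
    Filter.Tendsto (G n x α) (nhdsWithin qL (Set.Ioi qL)) Filter.atBot ∧
    Filter.Tendsto (G n x α) (nhdsWithin qH (Set.Iio qH)) Filter.atTop ∧
    ∃! q : ℝ, q ∈ Set.Ioo qL qH ∧ G n x α q = 0 := by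
  obtain ⟨hα0, hα1⟩ := hα
  obtain ⟨iL, hiL⟩ := hqL
  obtain ⟨iH, hiH⟩ := hqH
  have h1α : (0:ℝ) < 1 - α := by linarith
  set A := Finset.univ.filter (fun i => x i ≤ qL) with hAdef
  set B := Finset.univ.filter (fun i => qH ≤ x i) with hBdef
  have hiLA : iL ∈ A := by simp [hAdef, hiL]
  have hiHB : iH ∈ B := by simp [hBdef, hiH]
  have hxA : ∀ i ∈ A, x i ≤ qL := by intro i hi; simpa [hAdef] using hi
  have hxB : ∀ i ∈ B, qH ≤ x i := by intro i hi; simpa [hBdef] using hi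
  have hAq : ∀ q ∈ Set.Ioo qL qH, Finset.univ.filter (fun i => x i < q) = A := by
    intro q hq
    ext i
    simp only [hAdef, Finset.mem_filter, Finset.mem_univ, true_and]
    constructor
    · intro h
      by_contra hc
      push_neg at hc
      exact hgap i ⟨hc, lt_trans h hq.2⟩
    · intro h; exact lt_of_le_of_lt h hq.1
  have hBq : ∀ q ∈ Set.Ioo qL qH, Finset.univ.filter (fun i => q < x i) = B := by
    intro q hq
    ext i
    simp only [hBdef, Finset.mem_filter, Finset.mem_univ, true_and]
    constructor
    · intro h
      by_contra hc
      push_neg at hc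
      exact hgap i ⟨lt_trans hq.1 h, hc⟩
    · intro h; exact lt_of_lt_of_le hq.2 h
  set g : ℝ → ℝ := fun q =>
    (1 - α) * ∑ i ∈ A, Real.log (q - x i) - α * ∑ i ∈ B, Real.log (x i - q) with hgdef
  have hGg : ∀ q ∈ Set.Ioo qL qH, G n x α q = g q := by
    intro q hq
    simp only [G, hgdef, hAq q hq, hBq q hq]
  -- strict monotonicity
  have hmono : StrictMonoOn (G n x α) (Set.Ioo qL qH) := by
    intro a ha b hb hab
    rw [hGg a ha, hGg b hb]
    have h1 : ∑ i ∈ A, Real.log (a - x i) < ∑ i ∈ A, Real.log (b - x i) := by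
      refine Finset.sum_lt_sum_of_nonempty ⟨iL, hiLA⟩ ?_
      intro i hi
      have := hxA i hi
      exact Real.log_lt_log (by linarith [ha.1]) (by linarith)
    have h2 : ∑ i ∈ B, Real.log (x i - b) < ∑ i ∈ B, Real.log (x i - a) := by
      refine Finset.sum_lt_sum_of_nonempty ⟨iH, hiHB⟩ ?_
      intro i hi
      have := hxB i hi
      exact Real.log_lt_log (by linarith [hb.2]) (by linarith)
    have h1' := mul_lt_mul_of_pos_left h1 h1α
    have h2' := mul_lt_mul_of_pos_left h2 hα0
    simp only [hgdef]
    linarith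
  -- continuity
  have hcontg : ContinuousOn g (Set.Ioo qL qH) := by
    apply ContinuousOn.sub
    · apply continuousOn_const.mul
      refine continuousOn_finset_sum A ?_
      intro i hi q hq
      have hpos : q - x i ≠ 0 := ne_of_gt (by linarith [hxA i hi, hq.1])
      exact ((continuousAt_id.sub continuousAt_const).log hpos).continuousWithinAt
    · apply continuousOn_const.mul
      refine continuousOn_finset_sum B ?_
      intro i hi q hq
      have hpos : x i - q ≠ 0 := ne_of_gt (by linarith [hxB i hi, hq.2])
      exact ((continuousAt_const.sub continuousAt_id).log hpos).continuousWithinAt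
  have hcont : ContinuousOn (G n x α) (Set.Ioo qL qH) :=
    hcontg.congr (fun q hq => hGg q hq)
  -- split A and B
  set A1 := A.filter (fun i => x i = qL) with hA1def
  set A2 := A.filter (fun i => ¬ x i = qL) with hA2def
  set B1 := B.filter (fun i => x i = qH) with hB1def
  set B2 := B.filter (fun i => ¬ x i = qH) with hB2def
  have hiLA1 : iL ∈ A1 := by simp [hA1def, hiLA, hiL]
  have hiHB1 : iH ∈ B1 := by simp [hB1def, hiHB, hiH]
  have hA1card : (0:ℝ) < (A1.card : ℝ) := by
    have : 0 < A1.card := Finset.card_pos.mpr ⟨iL, hiLA1⟩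
    exact_mod_cast this
  have hB1card : (0:ℝ) < (B1.card : ℝ) := by
    have : 0 < B1.card := Finset.card_pos.mpr ⟨iH, hiHB1⟩
    exact_mod_cast this
  have hxA2 : ∀ i ∈ A2, x i < qL := by
    intro i hi
    simp only [hA2def, Finset.mem_filter] at hi
    exact lt_of_le_of_ne (hxA i hi.1) hi.2
  have hxB2 : ∀ i ∈ B2, qH < x i := by
    intro i hi
    simp only [hB2def, Finset.mem_filter] at hi
    exact lt_of_le_of_ne (hxB i hi.1) (Ne.symm hi.2)
  have hSA : ∀ q : ℝ, ∑ i ∈ A, Real.log (q - x i)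
      = (A1.card : ℝ) * Real.log (q - qL) + ∑ i ∈ A2, Real.log (q - x i) := by
    intro q
    rw [← Finset.sum_filter_add_sum_filter_not A (fun i => x i = qL)]
    congr 1
    rw [Finset.sum_congr rfl (fun i hi => by
      simp only [hA1def, Finset.mem_filter] at hi
      rw [hi.2])]
    simp [mul_comm]
    exact Or.inl rfl
  have hSB : ∀ q : ℝ, ∑ i ∈ B, Real.log (x i - q)
      = (B1.card : ℝ) * Real.log (qH - q) + ∑ i ∈ B2, Real.log (x i - q) := by
    intro q
    rw [← Finset.sum_filter_add_sum_filter_not B (fun i => x i = qH)]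
    congr 1
    rw [Finset.sum_congr rfl (fun i hi => by
      simp only [hB1def, Finset.mem_filter] at hi
      rw [hi.2])]
    simp [mul_comm]
    exact Or.inl rfl
  -- limit at qL from the right
  have hsubL : Tendsto (fun q : ℝ => q - qL) (𝓝[>] qL) (𝓝[>] (0:ℝ)) := by
    apply tendsto_nhdsWithin_of_tendsto_nhds_of_eventually_within
    · have : Tendsto (fun q : ℝ => q - qL) (𝓝 qL) (𝓝 (qL - qL)) :=
        (continuous_id.sub continuous_const).tendsto qL
      simpa using this.mono_left nhdsWithin_le_nhds
    · exact eventually_nhdsWithin_of_forall (fun q hq => Set.mem_Ioi.mpr (sub_pos.mpr hq))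
  have hlogL : Tendsto (fun q : ℝ => Real.log (q - qL)) (𝓝[>] qL) atBot :=
    Real.tendsto_log_nhdsGT_zero.comp hsubL
  have hA2lim : Tendsto (fun q : ℝ => ∑ i ∈ A2, Real.log (q - x i)) (𝓝[>] qL)
      (𝓝 (∑ i ∈ A2, Real.log (qL - x i))) := by
    refine Tendsto.mono_left ?_ nhdsWithin_le_nhds
    refine tendsto_finset_sum A2 ?_
    intro i hi
    have hpos : qL - x i ≠ 0 := ne_of_gt (by linarith [hxA2 i hi])
    exact ((continuousAt_id.sub continuousAt_const).log hpos).tendsto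
  have hBlimL : Tendsto (fun q : ℝ => ∑ i ∈ B, Real.log (x i - q)) (𝓝[>] qL)
      (𝓝 (∑ i ∈ B, Real.log (x i - qL))) := by
    refine Tendsto.mono_left ?_ nhdsWithin_le_nhds
    refine tendsto_finset_sum B ?_
    intro i hi
    have hpos : x i - qL ≠ 0 := ne_of_gt (by linarith [hxB i hi])
    exact ((continuousAt_const.sub continuousAt_id).log hpos).tendsto
  have hgbot : Tendsto g (𝓝[>] qL) atBot := by
    have hS1 : Tendsto (fun q : ℝ => ∑ i ∈ A, Real.log (q - x i)) (𝓝[>] qL) atBot := by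
      have h1 : Tendsto (fun q : ℝ => (A1.card : ℝ) * Real.log (q - qL)) (𝓝[>] qL) atBot :=
        hlogL.const_mul_atBot hA1card
      have := h1.atBot_add hA2lim
      refine this.congr (fun q => (hSA q).symm)
    have h2 : Tendsto (fun q : ℝ => (1 - α) * ∑ i ∈ A, Real.log (q - x i)) (𝓝[>] qL) atBot :=
      hS1.const_mul_atBot h1α
    have h3 : Tendsto (fun q : ℝ => -(α * ∑ i ∈ B, Real.log (x i - q))) (𝓝[>] qL)
        (𝓝 (-(α * ∑ i ∈ B, Real.log (x i - qL)))) := (hBlimL.const_mul α).neg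
    have := h2.atBot_add h3
    refine this.congr (fun q => ?_)
    simp only [hgdef]
    ring
  have htendL : Tendsto (G n x α) (𝓝[>] qL) atBot := by
    refine hgbot.congr' ?_
    filter_upwards [Ioo_mem_nhdsGT hLH] with q hq
    exact (hGg q hq).symm
  -- limit at qH from the left
  have hsubH : Tendsto (fun q : ℝ => qH - q) (𝓝[<] qH) (𝓝[>] (0:ℝ)) := by
    apply tendsto_nhdsWithin_of_tendsto_nhds_of_eventually_within
    · have : Tendsto (fun q : ℝ => qH - q) (𝓝 qH) (𝓝 (qH - qH)) :=
        (continuous_const.sub continuous_id).tendsto qH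
      simpa using this.mono_left nhdsWithin_le_nhds
    · exact eventually_nhdsWithin_of_forall (fun q hq => Set.mem_Ioi.mpr (sub_pos.mpr hq))
  have hlogH : Tendsto (fun q : ℝ => Real.log (qH - q)) (𝓝[<] qH) atBot :=
    Real.tendsto_log_nhdsGT_zero.comp hsubH
  have hB2lim : Tendsto (fun q : ℝ => ∑ i ∈ B2, Real.log (x i - q)) (𝓝[<] qH)
      (𝓝 (∑ i ∈ B2, Real.log (x i - qH))) := by
    refine Tendsto.mono_left ?_ nhdsWithin_le_nhds
    refine tendsto_finset_sum B2 ?_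
    intro i hi
    have hpos : x i - qH ≠ 0 := ne_of_gt (by linarith [hxB2 i hi])
    exact ((continuousAt_const.sub continuousAt_id).log hpos).tendsto
  have hAlimH : Tendsto (fun q : ℝ => ∑ i ∈ A, Real.log (q - x i)) (𝓝[<] qH)
      (𝓝 (∑ i ∈ A, Real.log (qH - x i))) := by
    refine Tendsto.mono_left ?_ nhdsWithin_le_nhds
    refine tendsto_finset_sum A ?_
    intro i hi
    have hpos : qH - x i ≠ 0 := ne_of_gt (by linarith [hxA i hi])
    exact ((continuousAt_id.sub continuousAt_const).log hpos).tendsto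
  have hgtop : Tendsto g (𝓝[<] qH) atTop := by
    have hS2 : Tendsto (fun q : ℝ => ∑ i ∈ B, Real.log (x i - q)) (𝓝[<] qH) atBot := by
      have h1 : Tendsto (fun q : ℝ => (B1.card : ℝ) * Real.log (qH - q)) (𝓝[<] qH) atBot :=
        hlogH.const_mul_atBot hB1card
      have := h1.atBot_add hB2lim
      refine this.congr (fun q => (hSB q).symm)
    have h2 : Tendsto (fun q : ℝ => -(α * ∑ i ∈ B, Real.log (x i - q))) (𝓝[<] qH) atTop := by
      rw [tendsto_neg_atTop_iff]
      exact hS2.const_mul_atBot hα0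
    have h3 : Tendsto (fun q : ℝ => (1 - α) * ∑ i ∈ A, Real.log (q - x i)) (𝓝[<] qH)
        (𝓝 ((1 - α) * ∑ i ∈ A, Real.log (qH - x i))) := hAlimH.const_mul (1 - α)
    have := h3.add_atTop h2
    refine this.congr (fun q => ?_)
    simp only [hgdef]
    ring
  have htendH : Tendsto (G n x α) (𝓝[<] qH) atTop := by
    refine hgtop.congr' ?_
    filter_upwards [Ioo_mem_nhdsLT hLH] with q hq
    exact (hGg q hq).symm
  refine ⟨hmono, hcont, htendL, htendH, ?_⟩
  -- unique zero
  have hneg : ∀ᶠ q in 𝓝[>] qL, G n x α q < 0 ∧ q ∈ Set.Ioo qL qH := by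
    filter_upwards [htendL.eventually_lt_atBot 0, Ioo_mem_nhdsGT hLH] with q h1 h2
    exact ⟨h1, h2⟩
  have hpos : ∀ᶠ q in 𝓝[<] qH, 0 < G n x α q ∧ q ∈ Set.Ioo qL qH := by
    filter_upwards [htendH.eventually_gt_atTop 0, Ioo_mem_nhdsLT hLH] with q h1 h2
    exact ⟨h1, h2⟩
  obtain ⟨a, haneg, haI⟩ := hneg.exists
  obtain ⟨b, hbpos, hbI⟩ := hpos.exists
  have hab : a < b := by
    by_contra hc
    push_neg at hc
    rcases eq_or_lt_of_le hc with h | h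
    · rw [h] at hbpos; linarith
    · have := hmono hbI haI h; linarith
  have hIcc : Set.Icc a b ⊆ Set.Ioo qL qH := Set.Icc_subset_Ioo haI.1 hbI.2
  have hmem0 : (0:ℝ) ∈ Set.Icc (G n x α a) (G n x α b) := ⟨le_of_lt haneg, le_of_lt hbpos⟩
  obtain ⟨q, hqIcc, hGq⟩ := intermediate_value_Icc (le_of_lt hab) (hcont.mono hIcc) hmem0
  refine ⟨q, ⟨hIcc hqIcc, hGq⟩, ?_⟩
  rintro q' ⟨hq'I, hGq'⟩
  exact hmono.injOn hq'I (hIcc hqIcc) (by rw [hGq', hGq])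
end

section
/- Let q_α be a unique sample α-quantile, i.e. F_n(q_α⁻) < α and F_n(q_α) > α. Then for every δ > 0 there exists ε_0 > 0 such that for all 0 < ε < ε_0, the unique minimizer q_{α,ε} of E_n L_{α,ε}(x,·) lies in (q_α − δ, q_α + δ). In particular q_{α,ε} → q_α as ε ↓ 0. -/
open Finset Real Filter Topology

noncomputable def FnMinus (n : ℕ) (x : Fin n → ℝ) (t : ℝ) : ℝ :=
  ((Finset.univ.filter (fun i => x i < t)).card : ℝ) / n

lemma convexOn_sum' {ι : Type*} (s : Finset ι) (f : ι → ℝ → ℝ)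
    (hf : ∀ i ∈ s, ConvexOn ℝ Set.univ (f i)) :
    ConvexOn ℝ Set.univ (fun q => ∑ i ∈ s, f i q) := by
  induction s using Finset.cons_induction with
  | empty => simpa using convexOn_const (0:ℝ) convex_univ
  | cons a s ha ih =>
    simp only [Finset.sum_cons]
    exact (hf a (Finset.mem_cons_self a s)).add
      (ih fun i hi => hf i (Finset.mem_cons_of_mem hi))

lemma convexOn_pospart_pow (c : ℝ) (sign : Bool) (p : ℝ) (hp : 1 ≤ p) :
    ConvexOn ℝ Set.univ
      (fun q : ℝ => (max (if sign then q - c else c - q) 0) ^ p) := by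
  set f : ℝ → ℝ := fun q => max (if sign then q - c else c - q) 0 with hf
  have haff : ConvexOn ℝ Set.univ (fun q : ℝ => if sign then q - c else c - q) := by
    refine ⟨convex_univ, ?_⟩
    intro a _ b _ s t hs ht hst
    simp only [smul_eq_mul]
    cases sign
    · simp only [Bool.false_eq_true, if_false]
      exact le_of_eq (by linear_combination (-c) * hst)
    · simp only [if_true]
      exact le_of_eq (by linear_combination c * hst)
  have hconvf : ConvexOn ℝ Set.univ f := by
    have := haff.sup (convexOn_const (0:ℝ) convex_univ)
    exact this
  have him : f '' Set.univ = Set.Ici (0:ℝ) := by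
    ext y
    simp only [Set.image_univ, Set.mem_range, Set.mem_Ici]
    constructor
    · rintro ⟨q, rfl⟩; exact le_max_right _ _
    · intro hy
      cases sign
      · exact ⟨c - y, by simp [hf, max_eq_left hy]⟩
      · exact ⟨y + c, by simp [hf, max_eq_left hy]⟩
  have hmono : MonotoneOn (fun t : ℝ => t ^ p) (f '' Set.univ) := by
    rw [him]
    intro a ha b _ hab
    exact Real.rpow_le_rpow ha hab (by linarith)
  have hg : ConvexOn ℝ (f '' Set.univ) (fun t : ℝ => t ^ p) := by
    rw [him]; exact convexOn_rpow hp
  exact hg.comp hconvf hmono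

lemma L_eq (α ε x q : ℝ) (hε : 0 ≤ ε) :
    L α ε x q = (1 - α) * (max (q - x) 0) ^ (1 + ε) + α * (max (x - q) 0) ^ (1 + ε) := by
  have h1 : (1 + ε) ≠ 0 := by linarith
  unfold L
  split
  · next h =>
    rw [max_eq_left (by linarith : (0:ℝ) ≤ q - x), max_eq_right (by linarith : x - q ≤ 0),
      Real.zero_rpow h1]
    ring
  · next h =>
    rw [max_eq_right (by linarith : q - x ≤ 0), max_eq_left (by linarith : (0:ℝ) ≤ x - q),
      Real.zero_rpow h1]
    ring

lemma convexOn_EnL (n : ℕ) (α ε : ℝ) (x : Fin n → ℝ) (hα : α ∈ Set.Ioo (0:ℝ) 1)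
    (hε : 0 ≤ ε) : ConvexOn ℝ Set.univ (EnL n α ε x) := by
  have hL : ∀ i : Fin n, ConvexOn ℝ Set.univ (fun q => L α ε (x i) q) := by
    intro i
    have h1 := (convexOn_pospart_pow (x i) true (1 + ε) (by linarith)).smul
      (by linarith [hα.2] : (0:ℝ) ≤ 1 - α)
    have h2 := (convexOn_pospart_pow (x i) false (1 + ε) (by linarith)).smul
      (le_of_lt hα.1)
    have := h1.add h2
    refine this.congr ?_
    intro q _
    dsimp only
    rw [L_eq α ε (x i) q hε]
    simp [smul_eq_mul]
  have hsum := convexOn_sum' Finset.univ (fun i q => L α ε (x i) q) (fun i _ => hL i)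
  have h := hsum.smul (by positivity : (0:ℝ) ≤ 1 / (n:ℝ))
  have heq : EnL n α ε x = fun q => (1 / (n:ℝ)) • ∑ i, L α ε (x i) q := by
    funext q; simp [EnL, smul_eq_mul]
  rw [heq]; exact h

lemma tendsto_EnL (n : ℕ) (α : ℝ) (x : Fin n → ℝ) (q : ℝ) :
    Tendsto (fun ε => EnL n α ε x q) (𝓝[>] (0:ℝ)) (𝓝 (EnL n α 0 x q)) := by
  have key : ∀ a : ℝ, Tendsto (fun ε : ℝ => a ^ (1 + ε)) (𝓝 0) (𝓝 (a ^ (1 + (0:ℝ)))) := by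
    intro a
    exact Filter.Tendsto.rpow tendsto_const_nhds
      (tendsto_const_nhds.add tendsto_id) (Or.inr (by norm_num))
  unfold EnL
  apply Tendsto.const_mul
  apply tendsto_finset_sum
  intro i _
  unfold L
  by_cases h : x i ≤ q
  · simp only [if_pos h]
    exact ((key (q - x i)).const_mul _).mono_left nhdsWithin_le_nhds
  · simp only [if_neg h]
    exact ((key (x i - q)).const_mul _).mono_left nhdsWithin_le_nhds


lemma gap_plus (n : ℕ) (hn : 1 ≤ n) (x : Fin n → ℝ) (α : ℝ)
    (hα : α ∈ Set.Ioo (0 : ℝ) 1) (qα : ℝ) (h2 : α < Fn n x qα)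
    (δ : ℝ) (hδ : 0 < δ) : EnL n α 0 x qα < EnL n α 0 x (qα + δ) := by
  have hn' : (0:ℝ) < n := by exact_mod_cast hn
  set k := (Finset.univ.filter (fun i => x i ≤ qα)).card with hkdef
  set m := (Finset.univ.filter (fun i => ¬ x i ≤ qα)).card with hmdef
  have hk : α * n < k := by
    have := h2
    rw [Fn, lt_div_iff₀ hn'] at this
    exact this
  have hkm : (k:ℝ) + m = n := by
    have h' : k + m = n := by
      have := Finset.card_filter_add_card_filter_not (p := fun i => x i ≤ qα)
        (s := (Finset.univ : Finset (Fin n)))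
      simp only [hkdef, hmdef]
      simpa [not_le] using this
    exact_mod_cast h'
  have hterm : ∀ i : Fin n,
      (if x i ≤ qα then (1-α)*δ else -(α*δ)) ≤ L α 0 (x i) (qα+δ) - L α 0 (x i) qα := by
    intro i
    have hα1 : (0:ℝ) < α := hα.1
    have hα2 : α < 1 := hα.2
    simp only [L, add_zero, Real.rpow_one]
    split_ifs <;> linarith
  have hsum : ∑ i, (if x i ≤ qα then (1-α)*δ else -(α*δ))
      ≤ ∑ i, (L α 0 (x i) (qα+δ) - L α 0 (x i) qα) :=
    Finset.sum_le_sum (fun i _ => hterm i)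
  have hlhs : ∑ i, (if x i ≤ qα then (1-α)*δ else -(α*δ))
      = (k:ℝ) * ((1-α)*δ) + (m:ℝ) * (-(α*δ)) := by
    rw [Finset.sum_ite]
    simp [hkdef, hmdef, mul_comm]
  have hpos : 0 < (k:ℝ) * ((1-α)*δ) + (m:ℝ) * (-(α*δ)) := by
    nlinarith [mul_pos hδ (show (0:ℝ) < (k:ℝ) - α*((k:ℝ)+(m:ℝ)) by rw [hkm]; linarith)]
  have hfinal : 0 < (1/(n:ℝ)) * ∑ i, (L α 0 (x i) (qα+δ) - L α 0 (x i) qα) := by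
    apply mul_pos (by positivity)
    calc (0:ℝ) < _ := hpos
    _ = _ := hlhs.symm
    _ ≤ _ := hsum
  rw [Finset.sum_sub_distrib, mul_sub] at hfinal
  unfold EnL
  linarith

lemma gap_minus (n : ℕ) (hn : 1 ≤ n) (x : Fin n → ℝ) (α : ℝ)
    (hα : α ∈ Set.Ioo (0 : ℝ) 1) (qα : ℝ) (h1 : FnMinus n x qα < α)
    (δ : ℝ) (hδ : 0 < δ) : EnL n α 0 x qα < EnL n α 0 x (qα - δ) := by
  have hn' : (0:ℝ) < n := by exact_mod_cast hn
  set k := (Finset.univ.filter (fun i => x i < qα)).card with hkdef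
  set m := (Finset.univ.filter (fun i => ¬ x i < qα)).card with hmdef
  have hk : (k:ℝ) < α * n := by
    have := h1
    rw [FnMinus, div_lt_iff₀ hn'] at this
    exact this
  have hkm : (k:ℝ) + m = n := by
    have h' : k + m = n := by
      have := Finset.card_filter_add_card_filter_not (p := fun i => x i < qα)
        (s := (Finset.univ : Finset (Fin n)))
      simp only [hkdef, hmdef]
      simpa [not_lt] using this
    exact_mod_cast h'
  have hterm : ∀ i : Fin n,
      (if x i < qα then -((1-α)*δ) else α*δ) ≤ L α 0 (x i) (qα-δ) - L α 0 (x i) qα := by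
    intro i
    have hα1 : (0:ℝ) < α := hα.1
    have hα2 : α < 1 := hα.2
    simp only [L, add_zero, Real.rpow_one]
    split_ifs <;> linarith
  have hsum : ∑ i, (if x i < qα then -((1-α)*δ) else α*δ)
      ≤ ∑ i, (L α 0 (x i) (qα-δ) - L α 0 (x i) qα) :=
    Finset.sum_le_sum (fun i _ => hterm i)
  have hlhs : ∑ i, (if x i < qα then -((1-α)*δ) else α*δ)
      = (k:ℝ) * (-((1-α)*δ)) + (m:ℝ) * (α*δ) := by
    rw [Finset.sum_ite]
    simp [hkdef, hmdef, mul_comm]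
  have hpos : 0 < (k:ℝ) * (-((1-α)*δ)) + (m:ℝ) * (α*δ) := by
    nlinarith [mul_pos hδ (show (0:ℝ) < α*((k:ℝ)+(m:ℝ)) - k by rw [hkm]; linarith)]
  have hfinal : 0 < (1/(n:ℝ)) * ∑ i, (L α 0 (x i) (qα-δ) - L α 0 (x i) qα) := by
    apply mul_pos (by positivity)
    calc (0:ℝ) < _ := hpos
    _ = _ := hlhs.symm
    _ ≤ _ := hsum
  rw [Finset.sum_sub_distrib, mul_sub] at hfinal
  unfold EnL
  linarith

theorem stmt_5 (n : ℕ) (hn : 1 ≤ n) (x : Fin n → ℝ) (α : ℝ)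
    (hα : α ∈ Set.Ioo (0 : ℝ) 1) (qα : ℝ)
    (h1 : FnMinus n x qα < α) (h2 : α < Fn n x qα)
    (qe : ℝ → ℝ) (hqe : ∀ ε : ℝ, 0 < ε → IsMinOn (EnL n α ε x) Set.univ (qe ε)) :
    (∀ δ : ℝ, 0 < δ → ∃ ε₀ : ℝ, 0 < ε₀ ∧ ∀ ε : ℝ, 0 < ε → ε < ε₀ →
      qe ε ∈ Set.Ioo (qα - δ) (qα + δ)) ∧
    Filter.Tendsto qe (nhdsWithin 0 (Set.Ioi 0)) (nhds qα) := by
  have key : ∀ δ : ℝ, 0 < δ → ∃ ε₀ : ℝ, 0 < ε₀ ∧ ∀ ε : ℝ, 0 < ε → ε < ε₀ →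
      qe ε ∈ Set.Ioo (qα - δ) (qα + δ) := by
    intro δ hδ
    have hplus := gap_plus n hn x α hα qα h2 δ hδ
    have hminus := gap_minus n hn x α hα qα h1 δ hδ
    have hev1 : ∀ᶠ ε in 𝓝[>] (0:ℝ), EnL n α ε x qα < EnL n α ε x (qα + δ) :=
      (tendsto_EnL n α x qα).eventually_lt (tendsto_EnL n α x (qα + δ)) hplus
    have hev2 : ∀ᶠ ε in 𝓝[>] (0:ℝ), EnL n α ε x qα < EnL n α ε x (qα - δ) :=
      (tendsto_EnL n α x qα).eventually_lt (tendsto_EnL n α x (qα - δ)) hminus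
    have hev := hev1.and hev2
    rw [eventually_iff, mem_nhdsGT_iff_exists_Ioo_subset] at hev
    obtain ⟨u, hu, hsub⟩ := hev
    refine ⟨u, hu, ?_⟩
    intro ε hε hεu
    obtain ⟨hlt1, hlt2⟩ := hsub ⟨hε, hεu⟩
    have hmin := hqe ε hε
    have hminq : EnL n α ε x (qe ε) ≤ EnL n α ε x qα := hmin (Set.mem_univ qα)
    have hcv := convexOn_EnL n α ε x hα (le_of_lt hε)
    constructor
    · by_contra h
      push_neg at h
      have hseg : qα - δ ∈ segment ℝ (qe ε) qα := by
        rw [segment_eq_Icc (by linarith : qe ε ≤ qα)]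
        exact ⟨h, by linarith⟩
      have := hcv.le_on_segment (Set.mem_univ (qe ε)) (Set.mem_univ qα) hseg
      rw [max_eq_right hminq] at this
      linarith
    · by_contra h
      push_neg at h
      have hseg : qα + δ ∈ segment ℝ qα (qe ε) := by
        rw [segment_eq_Icc (by linarith : qα ≤ qe ε)]
        exact ⟨by linarith, h⟩
      have := hcv.le_on_segment (Set.mem_univ qα) (Set.mem_univ (qe ε)) hseg
      rw [max_eq_left hminq] at this
      linarith
  refine ⟨key, ?_⟩
  rw [Metric.tendsto_nhds]
  intro δ hδ
  obtain ⟨ε₀, hε₀, hkey⟩ := key δ hδ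
  filter_upwards [Ioo_mem_nhdsGT_of_mem (Set.mem_Ico.mpr ⟨le_refl 0, hε₀⟩)] with ε hε
  obtain ⟨hl, hr⟩ := hkey ε hε.1 hε.2
  rw [Real.dist_eq, abs_lt]
  constructor <;> linarith
end

section
/- Suppose F_n(q) = α on the interval [q_L, q_H) with q_L, q_H consecutive sample points, and let q_α^log ∈ (q_L, q_H) be the unique zero of G(q) = (1-α) Σ_{i: x_i < q} log(q − x_i) − α Σ_{i: x_i > q} log(x_i − q). Then the unique minimizer q_{α,ε} of E_n L_{α,ε}(x,·) converges to q_α^log as ε ↓ 0. -/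
open Finset Real Filter Topology

lemma my_convex_max_sub (c : ℝ) : ConvexOn ℝ Set.univ (fun q : ℝ => max (q - c) 0) := by
  have h1 : ConvexOn ℝ Set.univ (fun q : ℝ => q - c) :=
    ⟨convex_univ, fun a _ b _ wa wb hwa hwb hab =>
      le_of_eq (by simp only [smul_eq_mul]; linear_combination c * hab)⟩
  have h2 : ConvexOn ℝ Set.univ (fun _ : ℝ => (0:ℝ)) := convexOn_const 0 convex_univ
  simpa [max_def, Pi.sup_def] using h1.sup h2

lemma my_img (c : ℝ) : (fun q : ℝ => max (q - c) 0) '' Set.univ = Set.Ici 0 := by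
  ext y
  constructor
  · rintro ⟨q, -, rfl⟩; exact Set.mem_Ici.mpr (le_max_right _ _)
  · intro hy
    refine ⟨c + y, Set.mem_univ _, ?_⟩
    show max (c + y - c) 0 = y
    rw [show c + y - c = y by ring]
    exact max_eq_left (Set.mem_Ici.mp hy)

lemma my_convex_term (c p : ℝ) (hp : 1 ≤ p) :
    ConvexOn ℝ Set.univ (fun q : ℝ => max (q - c) 0 ^ p) := by
  have hg : ConvexOn ℝ ((fun q : ℝ => max (q - c) 0) '' Set.univ) (fun x : ℝ => x ^ p) := by
    rw [my_img]; exact convexOn_rpow hp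
  have hmono : MonotoneOn (fun x : ℝ => x ^ p) ((fun q : ℝ => max (q - c) 0) '' Set.univ) := by
    rw [my_img]
    intro a ha b _ hab
    exact Real.rpow_le_rpow ha hab (by linarith)
  exact hg.comp (my_convex_max_sub c) hmono

lemma my_L_eq (α ε xi q : ℝ) (hε : 0 < ε) :
    L α ε xi q = (1 - α) * max (q - xi) 0 ^ (1 + ε) + α * max (xi - q) 0 ^ (1 + ε) := by
  have hne : (1 : ℝ) + ε ≠ 0 := by positivity
  unfold L
  split_ifs with h
  · rw [max_eq_left (by linarith), max_eq_right (by linarith), Real.zero_rpow hne]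
    ring
  · push_neg at h
    rw [max_eq_right (by linarith), max_eq_left (by linarith), Real.zero_rpow hne]
    ring

lemma my_convex_EnL (n : ℕ) (α ε : ℝ) (x : Fin n → ℝ) (hα : α ∈ Set.Ioo (0:ℝ) 1)
    (hε : 0 < ε) : ConvexOn ℝ Set.univ (EnL n α ε x) := by
  have hp : (1:ℝ) ≤ 1 + ε := by linarith
  have hterm : ∀ i : Fin n, ConvexOn ℝ Set.univ (fun q => L α ε (x i) q) := by
    intro i
    have h1 := (my_convex_term (x i) (1+ε) hp).smul (le_of_lt (by linarith [hα.2] : (0:ℝ) < 1 - α))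
    have h2 : ConvexOn ℝ Set.univ (fun q : ℝ => α * max (x i - q) 0 ^ (1+ε)) := by
      have hconv : ConvexOn ℝ Set.univ (fun q : ℝ => max (x i - q) 0 ^ (1+ε)) := by
        have himg : (fun q : ℝ => max (x i - q) 0) '' Set.univ = Set.Ici 0 := by
          ext y
          constructor
          · rintro ⟨q, -, rfl⟩; exact Set.mem_Ici.mpr (le_max_right _ _)
          · intro hy
            refine ⟨x i - y, Set.mem_univ _, ?_⟩
            show max (x i - (x i - y)) 0 = y
            rw [show x i - (x i - y) = y by ring]
            exact max_eq_left (Set.mem_Ici.mp hy)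
        have hg : ConvexOn ℝ ((fun q : ℝ => max (x i - q) 0) '' Set.univ) (fun t : ℝ => t ^ (1+ε)) := by
          rw [himg]; exact convexOn_rpow hp
        have hmono : MonotoneOn (fun t : ℝ => t ^ (1+ε)) ((fun q : ℝ => max (x i - q) 0) '' Set.univ) := by
          rw [himg]; intro a ha b _ hab; exact Real.rpow_le_rpow ha hab (by linarith)
        have hinner : ConvexOn ℝ Set.univ (fun q : ℝ => max (x i - q) 0) := by
          have h1 : ConvexOn ℝ Set.univ (fun q : ℝ => x i - q) :=
            ⟨convex_univ, fun a _ b _ wa wb hwa hwb hab =>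
              le_of_eq (by simp only [smul_eq_mul]; linear_combination (- x i) * hab)⟩
          have h2 : ConvexOn ℝ Set.univ (fun _ : ℝ => (0:ℝ)) := convexOn_const 0 convex_univ
          simpa [max_def, Pi.sup_def] using h1.sup h2
        exact hg.comp hinner hmono
      exact hconv.smul (le_of_lt hα.1)
    have := h1.add h2
    have heq : (fun q : ℝ => (1-α) • (max (q - x i) 0 ^ (1+ε)) + α • (max (x i - q) 0 ^ (1+ε)))
        = fun q => L α ε (x i) q := by
      funext q
      rw [my_L_eq α ε (x i) q hε]
      simp [smul_eq_mul]
    rwa [← heq]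
  have hsum : ∀ s : Finset (Fin n), ConvexOn ℝ Set.univ (fun q => ∑ i ∈ s, L α ε (x i) q) := by
    intro s
    induction s using Finset.induction_on with
    | empty => simpa using convexOn_const (0:ℝ) convex_univ
    | insert _ _ hni ih =>
        simp only [Finset.sum_insert hni]
        exact (hterm _).add ih
  have heq : EnL n α ε x = fun q => (1 / (n:ℝ)) • ∑ i, L α ε (x i) q := by
    funext q; simp [EnL, smul_eq_mul]
  rw [heq]
  exact (hsum Finset.univ).smul (by positivity : (0:ℝ) ≤ 1 / (n:ℝ))

lemma my_hasDerivAt_rpow_eps (t : ℝ) (ht : 0 < t) :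
    HasDerivAt (fun ε : ℝ => t ^ (1 + ε)) (t * Real.log t) 0 := by
  have h1 : HasDerivAt (fun ε : ℝ => 1 + ε) 1 0 := (hasDerivAt_id 0).const_add 1
  have h2 := (Real.hasStrictDerivAt_const_rpow ht ((1:ℝ) + 0)).hasDerivAt
  have := h2.comp 0 h1
  simpa [Real.rpow_one, mul_comm, Function.comp_def] using this

lemma my_hasDerivAt_log_left (c q : ℝ) (h : c < q) :
    HasDerivAt (fun q : ℝ => Real.log (q - c)) ((q - c)⁻¹) q := by
  have h1 : HasDerivAt (fun q : ℝ => q - c) 1 q := (hasDerivAt_id q).sub_const c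
  have := (Real.hasDerivAt_log (ne_of_gt (by linarith) : q - c ≠ 0)).comp q h1
  simpa [Function.comp_def] using this

lemma my_hasDerivAt_log_right (c q : ℝ) (h : q < c) :
    HasDerivAt (fun q : ℝ => Real.log (c - q)) (-(c - q)⁻¹) q := by
  have h1 : HasDerivAt (fun q : ℝ => c - q) (-1) q := (hasDerivAt_id q).const_sub c
  have := (Real.hasDerivAt_log (ne_of_gt (by linarith) : c - q ≠ 0)).comp q h1
  simpa [Function.comp_def] using this

lemma my_hasDerivAt_tlogt_left (c q : ℝ) (h : c < q) :
    HasDerivAt (fun q : ℝ => (q - c) * Real.log (q - c)) (Real.log (q - c) + 1) q := by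
  have h1 : HasDerivAt (fun q : ℝ => q - c) 1 q := (hasDerivAt_id q).sub_const c
  have h2 := my_hasDerivAt_log_left c q h
  have := h1.mul h2
  have hne : q - c ≠ 0 := ne_of_gt (by linarith)
  exact this.congr_deriv (by rw [one_mul, mul_inv_cancel₀ hne])

lemma my_hasDerivAt_tlogt_right (c q : ℝ) (h : q < c) :
    HasDerivAt (fun q : ℝ => (c - q) * Real.log (c - q)) (-(Real.log (c - q) + 1)) q := by
  have h1 : HasDerivAt (fun q : ℝ => c - q) (-1) q := (hasDerivAt_id q).const_sub c
  have h2 := my_hasDerivAt_log_right c q h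
  have := h1.mul h2
  have hne : c - q ≠ 0 := ne_of_gt (by linarith)
  exact this.congr_deriv (by rw [mul_neg, mul_inv_cancel₀ hne]; ring)

noncomputable def myPhi (n : ℕ) (x : Fin n → ℝ) (α qL qH ε q : ℝ) : ℝ :=
  (1 - α) * ∑ i ∈ Finset.univ.filter (fun i => x i ≤ qL), (q - x i) ^ (1 + ε)
    + α * ∑ i ∈ Finset.univ.filter (fun i => qH ≤ x i), (x i - q) ^ (1 + ε)

noncomputable def myD (n : ℕ) (x : Fin n → ℝ) (α qL qH q : ℝ) : ℝ :=
  (1 - α) * ∑ i ∈ Finset.univ.filter (fun i => x i ≤ qL), (q - x i) * Real.log (q - x i)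
    + α * ∑ i ∈ Finset.univ.filter (fun i => qH ≤ x i), (x i - q) * Real.log (x i - q)

noncomputable def myG (n : ℕ) (x : Fin n → ℝ) (α qL qH q : ℝ) : ℝ :=
  (1 - α) * ∑ i ∈ Finset.univ.filter (fun i => x i ≤ qL), Real.log (q - x i)
    - α * ∑ i ∈ Finset.univ.filter (fun i => qH ≤ x i), Real.log (x i - q)

lemma myPhi_hasDerivAt_eps (n : ℕ) (x : Fin n → ℝ) (α qL qH q : ℝ)
    (hq : q ∈ Set.Ioo qL qH) :
    HasDerivAt (fun ε => myPhi n x α qL qH ε q) (myD n x α qL qH q) 0 := by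
  have h1 : HasDerivAt (fun ε : ℝ => ∑ i ∈ Finset.univ.filter (fun i => x i ≤ qL), (q - x i) ^ (1 + ε))
      (∑ i ∈ Finset.univ.filter (fun i => x i ≤ qL), (q - x i) * Real.log (q - x i)) 0 := by
    apply HasDerivAt.fun_sum
    intro i hi
    have hx : x i ≤ qL := by simpa using (Finset.mem_filter.mp hi).2
    exact my_hasDerivAt_rpow_eps _ (by linarith [hq.1])
  have h2 : HasDerivAt (fun ε : ℝ => ∑ i ∈ Finset.univ.filter (fun i => qH ≤ x i), (x i - q) ^ (1 + ε))
      (∑ i ∈ Finset.univ.filter (fun i => qH ≤ x i), (x i - q) * Real.log (x i - q)) 0 := by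
    apply HasDerivAt.fun_sum
    intro i hi
    have hx : qH ≤ x i := by simpa using (Finset.mem_filter.mp hi).2
    exact my_hasDerivAt_rpow_eps _ (by linarith [hq.2])
  exact (h1.const_mul (1 - α)).add (h2.const_mul α)

lemma myPhi_zero (n : ℕ) (x : Fin n → ℝ) (α qL qH : ℝ)
    (hcA : ((Finset.univ.filter (fun i => x i ≤ qL)).card : ℝ) = n * α)
    (hcB : ((Finset.univ.filter (fun i => qH ≤ x i)).card : ℝ) = n * (1 - α))
    (a b : ℝ) : myPhi n x α qL qH 0 a = myPhi n x α qL qH 0 b := by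
  have key : ∀ c : ℝ, myPhi n x α qL qH 0 c =
      ((1 - α) * ((Finset.univ.filter (fun i => x i ≤ qL)).card : ℝ)
        - α * ((Finset.univ.filter (fun i => qH ≤ x i)).card : ℝ)) * c
      + ((1 - α) * (- ∑ i ∈ Finset.univ.filter (fun i => x i ≤ qL), x i)
        + α * (∑ i ∈ Finset.univ.filter (fun i => qH ≤ x i), x i)) := by
    intro c
    unfold myPhi
    simp only [add_zero, Real.rpow_one, Finset.sum_sub_distrib, Finset.sum_const, nsmul_eq_mul]
    ring
  rw [key a, key b, hcA, hcB]
  ring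

lemma myD_hasDerivAt (n : ℕ) (x : Fin n → ℝ) (α qL qH q : ℝ)
    (hq : q ∈ Set.Ioo qL qH)
    (hcA : ((Finset.univ.filter (fun i => x i ≤ qL)).card : ℝ) = n * α)
    (hcB : ((Finset.univ.filter (fun i => qH ≤ x i)).card : ℝ) = n * (1 - α)) :
    HasDerivAt (myD n x α qL qH) (myG n x α qL qH q) q := by
  have h1 : HasDerivAt (fun q : ℝ => ∑ i ∈ Finset.univ.filter (fun i => x i ≤ qL),
        (q - x i) * Real.log (q - x i))
      (∑ i ∈ Finset.univ.filter (fun i => x i ≤ qL), (Real.log (q - x i) + 1)) q := by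
    apply HasDerivAt.fun_sum
    intro i hi
    have hx : x i ≤ qL := by simpa using (Finset.mem_filter.mp hi).2
    exact my_hasDerivAt_tlogt_left _ _ (by linarith [hq.1])
  have h2 : HasDerivAt (fun q : ℝ => ∑ i ∈ Finset.univ.filter (fun i => qH ≤ x i),
        (x i - q) * Real.log (x i - q))
      (∑ i ∈ Finset.univ.filter (fun i => qH ≤ x i), (-(Real.log (x i - q) + 1))) q := by
    apply HasDerivAt.fun_sum
    intro i hi
    have hx : qH ≤ x i := by simpa using (Finset.mem_filter.mp hi).2
    exact my_hasDerivAt_tlogt_right _ _ (by linarith [hq.2])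
  have hD := (h1.const_mul (1 - α)).add (h2.const_mul α)
  have heq : (1 - α) * (∑ i ∈ Finset.univ.filter (fun i => x i ≤ qL), (Real.log (q - x i) + 1))
      + α * (∑ i ∈ Finset.univ.filter (fun i => qH ≤ x i), (-(Real.log (x i - q) + 1)))
      = myG n x α qL qH q := by
    unfold myG
    rw [Finset.sum_add_distrib, Finset.sum_neg_distrib, Finset.sum_add_distrib,
      Finset.sum_const, Finset.sum_const]
    simp only [nsmul_eq_mul, mul_one]
    linear_combination (1 - α) * hcA - α * hcB
  rw [← heq]
  exact hD

lemma myG_hasDerivAt (n : ℕ) (x : Fin n → ℝ) (α qL qH q : ℝ) (hq : q ∈ Set.Ioo qL qH) :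
    HasDerivAt (myG n x α qL qH)
      ((1 - α) * ∑ i ∈ Finset.univ.filter (fun i => x i ≤ qL), (q - x i)⁻¹
        + α * ∑ i ∈ Finset.univ.filter (fun i => qH ≤ x i), (x i - q)⁻¹) q := by
  have h1 : HasDerivAt (fun q : ℝ => ∑ i ∈ Finset.univ.filter (fun i => x i ≤ qL),
        Real.log (q - x i))
      (∑ i ∈ Finset.univ.filter (fun i => x i ≤ qL), (q - x i)⁻¹) q := by
    apply HasDerivAt.fun_sum
    intro i hi
    have hx : x i ≤ qL := by simpa using (Finset.mem_filter.mp hi).2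
    exact my_hasDerivAt_log_left _ _ (by linarith [hq.1])
  have h2 : HasDerivAt (fun q : ℝ => ∑ i ∈ Finset.univ.filter (fun i => qH ≤ x i),
        Real.log (x i - q))
      (∑ i ∈ Finset.univ.filter (fun i => qH ≤ x i), (-(x i - q)⁻¹)) q := by
    apply HasDerivAt.fun_sum
    intro i hi
    have hx : qH ≤ x i := by simpa using (Finset.mem_filter.mp hi).2
    exact my_hasDerivAt_log_right _ _ (by linarith [hq.2])
  have hG := (h1.const_mul (1 - α)).sub (h2.const_mul α)
  have heq : (1 - α) * (∑ i ∈ Finset.univ.filter (fun i => x i ≤ qL), (q - x i)⁻¹)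
      - α * (∑ i ∈ Finset.univ.filter (fun i => qH ≤ x i), (-(x i - q)⁻¹))
      = (1 - α) * ∑ i ∈ Finset.univ.filter (fun i => x i ≤ qL), (q - x i)⁻¹
        + α * ∑ i ∈ Finset.univ.filter (fun i => qH ≤ x i), (x i - q)⁻¹ := by
    rw [Finset.sum_neg_distrib]
    ring
  rw [← heq]
  exact hG

lemma myG_strictMono (n : ℕ) (x : Fin n → ℝ) (α qL qH : ℝ)
    (hα : α ∈ Set.Ioo (0:ℝ) 1) (hLH : qL < qH)
    (hqL : ∃ i, x i = qL) (hqH : ∃ i, x i = qH) :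
    StrictMonoOn (myG n x α qL qH) (Set.Ioo qL qH) := by
  apply strictMonoOn_of_deriv_pos (convex_Ioo qL qH)
  · intro q hq
    exact (myG_hasDerivAt n x α qL qH q hq).continuousAt.continuousWithinAt
  · intro q hq
    rw [interior_Ioo] at hq
    rw [(myG_hasDerivAt n x α qL qH q hq).deriv]
    obtain ⟨iL, hiL⟩ := hqL
    obtain ⟨iH, hiH⟩ := hqH
    have hAne : iL ∈ Finset.univ.filter (fun i => x i ≤ qL) := by
      simp [hiL]
    have hBne : iH ∈ Finset.univ.filter (fun i => qH ≤ x i) := by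
      simp [hiH]
    have hs1 : 0 < ∑ i ∈ Finset.univ.filter (fun i => x i ≤ qL), (q - x i)⁻¹ := by
      apply Finset.sum_pos
      · intro i hi
        have hx : x i ≤ qL := by simpa using (Finset.mem_filter.mp hi).2
        exact inv_pos.mpr (by linarith [hq.1])
      · exact ⟨iL, hAne⟩
    have hs2 : 0 < ∑ i ∈ Finset.univ.filter (fun i => qH ≤ x i), (x i - q)⁻¹ := by
      apply Finset.sum_pos
      · intro i hi
        have hx : qH ≤ x i := by simpa using (Finset.mem_filter.mp hi).2
        exact inv_pos.mpr (by linarith [hq.2])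
      · exact ⟨iH, hBne⟩
    have h1 : 0 < 1 - α := by linarith [hα.2]
    have := mul_pos h1 hs1
    have := mul_pos hα.1 hs2
    linarith

lemma myD_lt (n : ℕ) (x : Fin n → ℝ) (α qL qH : ℝ)
    (hα : α ∈ Set.Ioo (0:ℝ) 1) (hLH : qL < qH)
    (hqL : ∃ i, x i = qL) (hqH : ∃ i, x i = qH)
    (hcA : ((Finset.univ.filter (fun i => x i ≤ qL)).card : ℝ) = n * α)
    (hcB : ((Finset.univ.filter (fun i => qH ≤ x i)).card : ℝ) = n * (1 - α))
    (qlog : ℝ) (hqlog : qlog ∈ Set.Ioo qL qH) (hGz : myG n x α qL qH qlog = 0)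
    (c : ℝ) (hc : c ∈ Set.Ioo qL qH) (hne : c ≠ qlog) :
    myD n x α qL qH qlog < myD n x α qL qH c := by
  have hmono := myG_strictMono n x α qL qH hα hLH hqL hqH
  rcases lt_or_gt_of_ne hne with hlt | hgt
  · -- c < qlog : myD strictly anti on Icc c qlog
    have hanti : StrictAntiOn (myD n x α qL qH) (Set.Icc c qlog) := by
      apply strictAntiOn_of_deriv_neg (convex_Icc c qlog)
      · intro q hq
        have hq' : q ∈ Set.Ioo qL qH := ⟨lt_of_lt_of_le hc.1 hq.1, lt_of_le_of_lt hq.2 hqlog.2⟩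
        exact (myD_hasDerivAt n x α qL qH q hq' hcA hcB).continuousAt.continuousWithinAt
      · intro q hq
        rw [interior_Icc] at hq
        have hq' : q ∈ Set.Ioo qL qH := ⟨lt_trans hc.1 hq.1, lt_trans hq.2 hqlog.2⟩
        rw [(myD_hasDerivAt n x α qL qH q hq' hcA hcB).deriv]
        have := hmono hq' hqlog hq.2
        linarith [hGz]
    have := hanti (Set.mem_Icc.mpr ⟨le_refl c, hlt.le⟩) (Set.mem_Icc.mpr ⟨hlt.le, le_refl qlog⟩) hlt
    linarith
  · -- qlog < c : myD strictly mono on Icc qlog c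
    have hmo : StrictMonoOn (myD n x α qL qH) (Set.Icc qlog c) := by
      apply strictMonoOn_of_deriv_pos (convex_Icc qlog c)
      · intro q hq
        have hq' : q ∈ Set.Ioo qL qH := ⟨lt_of_lt_of_le hqlog.1 hq.1, lt_of_le_of_lt hq.2 hc.2⟩
        exact (myD_hasDerivAt n x α qL qH q hq' hcA hcB).continuousAt.continuousWithinAt
      · intro q hq
        rw [interior_Icc] at hq
        have hq' : q ∈ Set.Ioo qL qH := ⟨lt_trans hqlog.1 hq.1, lt_trans hq.2 hc.2⟩
        rw [(myD_hasDerivAt n x α qL qH q hq' hcA hcB).deriv]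
        have := hmono hqlog hq' hq.1
        linarith [hGz]
    exact hmo (Set.mem_Icc.mpr ⟨le_refl qlog, hgt.le⟩) (Set.mem_Icc.mpr ⟨hgt.le, le_refl c⟩) hgt

theorem stmt_6 (n : ℕ) (hn : 1 ≤ n) (x : Fin n → ℝ) (α : ℝ)
    (hα : α ∈ Set.Ioo (0 : ℝ) 1) (qL qH : ℝ) (hLH : qL < qH)
    (hqL : ∃ i, x i = qL) (hqH : ∃ i, x i = qH)
    (hgap : ∀ i, x i ∉ Set.Ioo qL qH)
    (hF : ∀ q ∈ Set.Ico qL qH, Fn n x q = α)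
    (qlog : ℝ) (hqlog : qlog ∈ Set.Ioo qL qH) (hzero : G n x α qlog = 0)
    (qe : ℝ → ℝ) (hqe : ∀ ε : ℝ, 0 < ε → IsMinOn (EnL n α ε x) Set.univ (qe ε)) :
    Filter.Tendsto qe (nhdsWithin 0 (Set.Ioi 0)) (nhds qlog) := by
  classical
  obtain ⟨hα0, hα1⟩ := hα
  have hnpos : (0:ℝ) < n := by exact_mod_cast hn
  have hpart : ∀ i : Fin n, x i ≤ qL ∨ qH ≤ x i := by
    intro i
    rcases le_or_gt (x i) qL with h | h
    · exact Or.inl h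
    · rcases le_or_gt qH (x i) with h' | h'
      · exact Or.inr h'
      · exact absurd ⟨h, h'⟩ (hgap i)
  have hBcompl : Finset.univ.filter (fun i => qH ≤ x i)
      = Finset.univ.filter (fun i => ¬ x i ≤ qL) := by
    ext i
    simp only [Finset.mem_filter, Finset.mem_univ, true_and, not_le]
    constructor
    · intro h; linarith
    · intro h
      rcases hpart i with h' | h'
      · linarith
      · exact h'
  have hcA : ((Finset.univ.filter (fun i => x i ≤ qL)).card : ℝ) = n * α := by
    have h := hF qL ⟨le_refl _, hLH⟩
    unfold Fn at h
    rw [div_eq_iff (ne_of_gt hnpos)] at h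
    linarith
  have hsumcard : (Finset.univ.filter (fun i => x i ≤ qL)).card
      + (Finset.univ.filter (fun i => qH ≤ x i)).card = n := by
    rw [hBcompl, Finset.card_filter_add_card_filter_not]
    simp
  have hcB : ((Finset.univ.filter (fun i => qH ≤ x i)).card : ℝ) = n * (1 - α) := by
    have h2 : ((Finset.univ.filter (fun i => x i ≤ qL)).card : ℝ)
        + ((Finset.univ.filter (fun i => qH ≤ x i)).card : ℝ) = n := by
      exact_mod_cast hsumcard
    linear_combination h2 - hcA
  have hGz : myG n x α qL qH qlog = 0 := by
    have hAq : Finset.univ.filter (fun i => x i < qlog) = Finset.univ.filter (fun i => x i ≤ qL) := by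
      ext i
      simp only [Finset.mem_filter, Finset.mem_univ, true_and]
      constructor
      · intro h
        rcases hpart i with h' | h'
        · exact h'
        · linarith [hqlog.2]
      · intro h; linarith [hqlog.1]
    have hBq : Finset.univ.filter (fun i => qlog < x i) = Finset.univ.filter (fun i => qH ≤ x i) := by
      ext i
      simp only [Finset.mem_filter, Finset.mem_univ, true_and]
      constructor
      · intro h
        rcases hpart i with h' | h'
        · linarith [hqlog.1]
        · exact h'
      · intro h; linarith [hqlog.2]
    unfold myG
    unfold G at hzero
    rw [← hAq, ← hBq]
    exact hzero
  have hEnL : ∀ ε q, 0 < ε → q ∈ Set.Ioo qL qH →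
      EnL n α ε x q = (1/(n:ℝ)) * myPhi n x α qL qH ε q := by
    intro ε q hε hq
    unfold EnL myPhi
    congr 1
    rw [← Finset.sum_filter_add_sum_filter_not Finset.univ (fun i => x i ≤ qL)
      (fun i => L α ε (x i) q), ← hBcompl, Finset.mul_sum, Finset.mul_sum]
    congr 1
    · apply Finset.sum_congr rfl
      intro i hi
      have hx : x i ≤ qL := by simpa using (Finset.mem_filter.mp hi).2
      unfold L
      rw [if_pos (le_trans hx hq.1.le)]
    · apply Finset.sum_congr rfl
      intro i hi
      have hx : qH ≤ x i := by simpa using (Finset.mem_filter.mp hi).2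
      unfold L
      rw [if_neg (not_le.mpr (lt_of_lt_of_le hq.2 hx))]
  have key : ∀ c ∈ Set.Ioo qL qH, c ≠ qlog →
      ∀ᶠ ε in 𝓝[>] (0:ℝ), EnL n α ε x qlog < EnL n α ε x c := by
    intro c hc hne
    have hDlt := myD_lt n x α qL qH ⟨hα0, hα1⟩ hLH hqL hqH hcA hcB qlog hqlog hGz c hc hne
    set F : ℝ → ℝ := fun ε => myPhi n x α qL qH ε c - myPhi n x α qL qH ε qlog with hFdef
    have hF0 : F 0 = 0 := by
      rw [hFdef]
      simp only
      rw [myPhi_zero n x α qL qH hcA hcB c qlog, sub_self]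
    have hd : HasDerivAt F (myD n x α qL qH c - myD n x α qL qH qlog) 0 :=
      (myPhi_hasDerivAt_eps n x α qL qH c hc).sub (myPhi_hasDerivAt_eps n x α qL qH qlog hqlog)
    have hslope := hasDerivAt_iff_tendsto_slope.mp hd
    have hev : ∀ᶠ ε in 𝓝[≠] (0:ℝ), 0 < slope F 0 ε :=
      hslope.eventually (lt_mem_nhds (sub_pos.mpr hDlt))
    have hsub : Set.Ioi (0:ℝ) ⊆ ({(0:ℝ)}ᶜ : Set ℝ) := fun y hy => by
      simp only [Set.mem_compl_iff, Set.mem_singleton_iff]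
      exact ne_of_gt hy
    have hev' : ∀ᶠ ε in 𝓝[>] (0:ℝ), 0 < slope F 0 ε :=
      hev.filter_mono (nhdsWithin_mono 0 hsub)
    filter_upwards [hev', self_mem_nhdsWithin] with ε hsl hε
    have hε' : (0:ℝ) < ε := hε
    rw [slope_def_field, hF0, sub_zero, sub_zero] at hsl
    have hFpos : 0 < F ε := by
      have := mul_pos hsl hε'
      rwa [div_mul_cancel₀ _ (ne_of_gt hε')] at this
    rw [hEnL ε qlog hε' hqlog, hEnL ε c hε' hc]
    have hn' : (0:ℝ) < 1/(n:ℝ) := by positivity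
    have : myPhi n x α qL qH ε qlog < myPhi n x α qL qH ε c := by
      have := hFpos
      rw [hFdef] at this
      simp only at this
      linarith
    exact mul_lt_mul_of_pos_left this hn'
  rw [Metric.tendsto_nhds]
  intro δ hδ
  set δ' := min (δ/2) (min ((qH - qlog)/2) ((qlog - qL)/2)) with hδ'def
  have hδ'pos : 0 < δ' := by
    apply lt_min
    · linarith
    · apply lt_min
      · linarith [hqlog.2]
      · linarith [hqlog.1]
  have hd1 : δ' ≤ δ/2 := min_le_left _ _
  have hd2 : δ' ≤ (qH - qlog)/2 := le_trans (min_le_right _ _) (min_le_left _ _)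
  have hd3 : δ' ≤ (qlog - qL)/2 := le_trans (min_le_right _ _) (min_le_right _ _)
  have ha : qlog + δ' ∈ Set.Ioo qL qH := ⟨by linarith [hqlog.1], by linarith [hqlog.2]⟩
  have hb : qlog - δ' ∈ Set.Ioo qL qH := ⟨by linarith [hqlog.1], by linarith [hqlog.2]⟩
  filter_upwards [key (qlog + δ') ha (by linarith), key (qlog - δ') hb (by linarith),
    self_mem_nhdsWithin] with ε h1 h2 hε
  have hε' : (0:ℝ) < ε := hε
  have hmin := hqe ε hε'
  have hle : ∀ q, EnL n α ε x (qe ε) ≤ EnL n α ε x q :=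
    fun q => isMinOn_iff.mp hmin q (Set.mem_univ q)
  have hconv := my_convex_EnL n α ε x ⟨hα0, hα1⟩ hε'
  have hqea : qe ε < qlog + δ' := by
    by_contra hcon
    push_neg at hcon
    have hseg : qlog + δ' ∈ segment ℝ qlog (qe ε) := by
      rw [segment_eq_Icc (by linarith : qlog ≤ qe ε)]
      exact ⟨by linarith, hcon⟩
    have hb2 := hconv.le_on_segment (Set.mem_univ qlog) (Set.mem_univ (qe ε)) hseg
    have : EnL n α ε x (qlog + δ') ≤ EnL n α ε x qlog :=
      le_trans hb2 (max_le (le_refl _) (hle qlog))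
    linarith
  have hqeb : qlog - δ' < qe ε := by
    by_contra hcon
    push_neg at hcon
    have hseg : qlog - δ' ∈ segment ℝ (qe ε) qlog := by
      rw [segment_eq_Icc (by linarith : qe ε ≤ qlog)]
      exact ⟨hcon, by linarith⟩
    have hb2 := hconv.le_on_segment (Set.mem_univ (qe ε)) (Set.mem_univ qlog) hseg
    have : EnL n α ε x (qlog - δ') ≤ EnL n α ε x qlog :=
      le_trans hb2 (max_le (hle qlog) (le_refl _))
    linarith
  rw [Real.dist_eq, abs_lt]
  constructor <;> linarith
end

section
/- If the log-moment balance equation (1-α) Σ_{i: x_i < q} log(q − x_i) = α Σ_{i: x_i > q} log(x_i − q) holds at some q in an open interval containing no sample points, and also holds at q' in the same interval with q < q', then q = q' (i.e., the solution is unique on any sample-free interval). -/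
open Finset Real

theorem stmt_17 (n : ℕ) (hn : 1 ≤ n) (x : Fin n → ℝ) (α : ℝ)
    (hα : α ∈ Set.Ioo (0 : ℝ) 1) (a b : ℝ) (hab : a < b)
    (hgap : ∀ i, x i ∉ Set.Ioo a b)
    (hbelow : ∃ i, x i ≤ a) (habove : ∃ i, b ≤ x i)
    (q q' : ℝ) (hq : q ∈ Set.Ioo a b) (hq' : q' ∈ Set.Ioo a b)
    (hbal : (1 - α) * ∑ i ∈ Finset.univ.filter (fun i => x i < q), Real.log (q - x i)
      = α * ∑ i ∈ Finset.univ.filter (fun i => q < x i), Real.log (x i - q))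
    (hbal' : (1 - α) * ∑ i ∈ Finset.univ.filter (fun i => x i < q'), Real.log (q' - x i)
      = α * ∑ i ∈ Finset.univ.filter (fun i => q' < x i), Real.log (x i - q')) :
    q = q' := by
  obtain ⟨ha0, ha1⟩ := hα
  have hset1 : ∀ t ∈ Set.Ioo a b, Finset.univ.filter (fun i => x i < t)
      = Finset.univ.filter (fun i => x i ≤ a) := by
    intro t ht
    ext i
    simp only [mem_filter, mem_univ, true_and]
    constructor
    · intro h
      by_contra hc
      push_neg at hc
      exact hgap i ⟨hc, lt_trans h ht.2⟩
    · intro h; exact lt_of_le_of_lt h ht.1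
  have hset2 : ∀ t ∈ Set.Ioo a b, Finset.univ.filter (fun i => t < x i)
      = Finset.univ.filter (fun i => b ≤ x i) := by
    intro t ht
    ext i
    simp only [mem_filter, mem_univ, true_and]
    constructor
    · intro h
      by_contra hc
      push_neg at hc
      exact hgap i ⟨lt_trans ht.1 h, hc⟩
    · intro h; exact lt_of_lt_of_le ht.2 h
  rw [hset1 q hq, hset2 q hq] at hbal
  rw [hset1 q' hq', hset2 q' hq'] at hbal'
  obtain ⟨i0, hi0⟩ := hbelow
  obtain ⟨i1, hi1⟩ := habove
  have hS1 : (Finset.univ.filter (fun i => x i ≤ a)).Nonempty := ⟨i0, by simp [hi0]⟩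
  have hS2 : (Finset.univ.filter (fun i => b ≤ x i)).Nonempty := ⟨i1, by simp [hi1]⟩
  have key : ∀ u v : ℝ, u ∈ Set.Ioo a b → v ∈ Set.Ioo a b → u < v →
      (1 - α) * ∑ i ∈ Finset.univ.filter (fun i => x i ≤ a), Real.log (u - x i)
        = α * ∑ i ∈ Finset.univ.filter (fun i => b ≤ x i), Real.log (x i - u) →
      (1 - α) * ∑ i ∈ Finset.univ.filter (fun i => x i ≤ a), Real.log (v - x i)
        = α * ∑ i ∈ Finset.univ.filter (fun i => b ≤ x i), Real.log (x i - v) → False := by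
    intro u v hu hv huv e1 e2
    have h1 : ∑ i ∈ Finset.univ.filter (fun i => x i ≤ a), Real.log (u - x i)
        < ∑ i ∈ Finset.univ.filter (fun i => x i ≤ a), Real.log (v - x i) := by
      apply Finset.sum_lt_sum_of_nonempty hS1
      intro i hi
      simp only [mem_filter, mem_univ, true_and] at hi
      exact Real.log_lt_log (by linarith [hu.1]) (by linarith)
    have h2 : ∑ i ∈ Finset.univ.filter (fun i => b ≤ x i), Real.log (x i - v)
        < ∑ i ∈ Finset.univ.filter (fun i => b ≤ x i), Real.log (x i - u) := by
      apply Finset.sum_lt_sum_of_nonempty hS2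
      intro i hi
      simp only [mem_filter, mem_univ, true_and] at hi
      exact Real.log_lt_log (by linarith [hv.2]) (by linarith)
    have c1 : (1 - α) * ∑ i ∈ Finset.univ.filter (fun i => x i ≤ a), Real.log (u - x i)
        < (1 - α) * ∑ i ∈ Finset.univ.filter (fun i => x i ≤ a), Real.log (v - x i) :=
      mul_lt_mul_of_pos_left h1 (by linarith)
    have c2 : α * ∑ i ∈ Finset.univ.filter (fun i => b ≤ x i), Real.log (x i - v)
        < α * ∑ i ∈ Finset.univ.filter (fun i => b ≤ x i), Real.log (x i - u) :=
      mul_lt_mul_of_pos_left h2 ha0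
    linarith
  rcases lt_trichotomy q q' with h | h | h
  · exact absurd (key q q' hq hq' h hbal hbal') (fun f => f.elim)
  · exact h
  · exact absurd (key q' q hq' hq h hbal' hbal) (fun f => f.elim)
end
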